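/- Let G be a primitive solvable subgroup of Sym(Ω) with unique minimal normal subgroup A, let x ∈ Ω, and let B be a minimal normal subgroup of the stabilizer G_x. If the centralizer C_A(B) of B in A is trivial, then x is the only fixed point of the action of B on Ω. -/
import Mathlib


/-- A subgroup `G` of `Sym(Ω)` is primitive if it acts transitively on `Ω`
and every point stabilizer is a maximal subgroup of `G`. -/
def IsPrimitivePermSubgroup {Ω : Type*} [Fintype Ω] (G : Subgroup (Equiv.Perm Ω)) : Prop :=
  MulAction.IsPretransitive G Ω ∧ ∀ x : Ω, IsCoatom (MulAction.stabilizer G x)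

/-- `A` is a minimal normal subgroup: nontrivial, normal, and containing no smaller
nontrivial normal subgroup. -/
def IsMinimalNormalSubgroup {H : Type*} [Group H] (A : Subgroup H) : Prop :=
  A.Normal ∧ A ≠ ⊥ ∧ ∀ B : Subgroup H, B.Normal → B ≠ ⊥ → B ≤ A → B = A
/-- Let G be primitive solvable in Sym(Ω) with unique minimal normal subgroup A, x ∈ Ω,
and B a minimal normal subgroup of the stabilizer G_x. If the centralizer of B in A is
trivial, then x is the only fixed point of the action of B on Ω. -/
theorem unique_fixed_point_of_trivial_centralizer {Ω : Type*} [Fintype Ω] [Nonempty Ω]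
    (G : Subgroup (Equiv.Perm Ω))
    (hprim : IsPrimitivePermSubgroup G) (hsolv : IsSolvable G)
    (A : Subgroup G) (hA : IsMinimalNormalSubgroup A)
    (x : Ω) (B : Subgroup G)
    (hBS : B ≤ MulAction.stabilizer G x)
    (hBnormal : ∀ g ∈ MulAction.stabilizer G x, ∀ b ∈ B, g * b * g⁻¹ ∈ B)
    (hBne : B ≠ ⊥)
    (hBmin : ∀ B' : Subgroup G, B' ≤ B →
      (∀ g ∈ MulAction.stabilizer G x, ∀ b ∈ B', g * b * g⁻¹ ∈ B') → B' ≠ ⊥ → B' = B)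
    (hcent : ∀ a ∈ A, (∀ b ∈ B, a * b = b * a) → a = 1) :
    {y : Ω | ∀ b ∈ B, b • y = y} = {x} := by
  obtain ⟨htrans, hcoatom⟩ := hprim
  haveI := hA.1
  set S := MulAction.stabilizer G x with hSdef
  -- faithfulness of the action of G on Ω
  have hfaith : ∀ g : G, (∀ y : Ω, g • y = y) → g = 1 := by
    intro g hg
    refine Subtype.ext (Equiv.ext fun y => ?_)
    simpa [Subgroup.smul_def, Equiv.Perm.smul_def] using hg y
  -- A is not contained in the stabilizer
  have hAnotle : ¬ A ≤ S := by
    intro hle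
    apply hA.2.1
    rw [eq_bot_iff]
    intro a ha
    have ha1 : a = 1 := by
      apply hfaith
      intro y
      obtain ⟨g, rfl⟩ := htrans.exists_smul_eq x y
      have hmem : g⁻¹ * a * g ∈ A := by
        simpa using hA.1.conj_mem a ha g⁻¹
      have hfix : (g⁻¹ * a * g) • x = x := hle hmem
      calc a • g • x = g • ((g⁻¹ * a * g) • x) := by
            rw [← mul_smul, ← mul_smul]; group
        _ = g • x := by rw [hfix]
    simp [ha1]
  -- primitivity gives A ⊔ S = ⊤
  have hsup : A ⊔ S = ⊤ := (hcoatom x).2 _ (right_lt_sup.mpr hAnotle)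
  -- decomposition of elements of G
  have hdecomp : ∀ g : G, ∃ a ∈ A, ∃ s ∈ S, g = a * s := by
    intro g
    have hg : g ∈ (↑(A ⊔ S) : Set G) := by rw [hsup]; trivial
    rw [Subgroup.normal_mul] at hg
    obtain ⟨a, ha, s, hs, h⟩ := hg
    exact ⟨a, ha, s, hs, h.symm⟩
  -- A is transitive
  have hAtrans : ∀ y : Ω, ∃ a ∈ A, a • x = y := by
    intro y
    obtain ⟨g, hg⟩ := htrans.exists_smul_eq x y
    obtain ⟨a, ha, s, hs, rfl⟩ := hdecomp g
    refine ⟨a, ha, ?_⟩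
    rw [mul_smul, MulAction.mem_stabilizer_iff.mp hs] at hg
    exact hg
  -- A is abelian
  have habel : ∀ a ∈ A, ∀ b ∈ A, a * b = b * a := by
    have hcommle : ⁅A, A⁆ ≤ A := Subgroup.commutator_le.mpr fun g hg h hh => by
      rw [commutatorElement_def]
      exact mul_mem (mul_mem (mul_mem hg hh) (inv_mem hg)) (inv_mem hh)
    have hcomm : ⁅A, A⁆ = ⊥ := by
      by_contra hne
      have heq : ⁅A, A⁆ = A := hA.2.2 _ (Subgroup.commutator_normal A A) hne hcommle
      have hle : ∀ n, A ≤ derivedSeries G n := by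
        intro n
        induction n with
        | zero => exact le_top
        | succ n ih =>
          rw [derivedSeries_succ]
          calc A = ⁅A, A⁆ := heq.symm
            _ ≤ _ := Subgroup.commutator_mono ih ih
      obtain ⟨n, hn⟩ := hsolv
      exact hA.2.1 (le_bot_iff.mp (hn ▸ hle n))
    intro a ha b hb
    have h := Subgroup.commutator_le.mp hcomm.le a ha b hb
    rw [Subgroup.mem_bot, commutatorElement_eq_one_iff_mul_comm] at h
    exact h
  -- A ∩ S is normal in G
  have hKnormal : (A ⊓ S).Normal := by
    constructor
    intro k hk g
    rw [Subgroup.mem_inf] at hk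
    obtain ⟨hkA, hkS⟩ := hk
    obtain ⟨a, ha, s, hs, rfl⟩ := hdecomp g
    have hk'A : s * k * s⁻¹ ∈ A := hA.1.conj_mem k hkA s
    have hk'S : s * k * s⁻¹ ∈ S := by
      have hsx : s⁻¹ • x = x := MulAction.mem_stabilizer_iff.mp (S.inv_mem hs)
      rw [MulAction.mem_stabilizer_iff, mul_smul, mul_smul, hsx,
        MulAction.mem_stabilizer_iff.mp hkS, MulAction.mem_stabilizer_iff.mp hs]
    have heq : (a * s) * k * (a * s)⁻¹ = s * k * s⁻¹ := by
      have hc := habel a ha (s * k * s⁻¹) hk'A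
      have : (a * s) * k * (a * s)⁻¹ = a * (s * k * s⁻¹) * a⁻¹ := by group
      rw [this, hc]
      group
    rw [heq]
    exact Subgroup.mem_inf.mpr ⟨hk'A, hk'S⟩
  -- hence A ∩ S = ⊥
  have hK : A ⊓ S = ⊥ := by
    by_contra hne
    have h : A ⊓ S = A := hA.2.2 _ hKnormal hne inf_le_left
    exact hAnotle (h ▸ inf_le_right)
  -- main argument
  ext y
  simp only [Set.mem_setOf_eq, Set.mem_singleton_iff]
  constructor
  · intro hy
    obtain ⟨a, ha, hax⟩ := hAtrans y
    have ha1 : a = 1 := by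
      apply hcent a ha
      intro b hb
      have hbx : b • x = x := MulAction.mem_stabilizer_iff.mp (hBS hb)
      have hbix : b⁻¹ • x = x := MulAction.mem_stabilizer_iff.mp (S.inv_mem (hBS hb))
      have hcA : a⁻¹ * (b * a * b⁻¹) ∈ A :=
        mul_mem (inv_mem ha) (by simpa [mul_assoc] using hA.1.conj_mem a ha b)
      have hcS : a⁻¹ * (b * a * b⁻¹) ∈ S := by
        rw [MulAction.mem_stabilizer_iff, mul_smul, mul_smul, mul_smul, hbix, hax,
          hy b hb, ← hax, inv_smul_smul]
      have hc1 : a⁻¹ * (b * a * b⁻¹) = 1 := by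
        have hmem : a⁻¹ * (b * a * b⁻¹) ∈ A ⊓ S := Subgroup.mem_inf.mpr ⟨hcA, hcS⟩
        rw [hK, Subgroup.mem_bot] at hmem
        exact hmem
      have : b * a * b⁻¹ = a := by
        have := congrArg (a * ·) hc1
        simpa [mul_assoc] using this
      calc a * b = (b * a * b⁻¹) * b := by rw [this]
        _ = b * a := by group
    rw [ha1, one_smul] at hax
    exact hax.symm
  · rintro rfl
    exact fun b hb => MulAction.mem_stabilizer_iff.mp (hBS hb)
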